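/- arXiv:1102.2510 — 7 statements merged into one kernel-verified Lean document; each statement's English description precedes it below -/
import Mathlib

section
/- All zeros z of P(z) = z^n + a_1 z^{n-1} + ... + a_n satisfy |z| ≤ (|a_1| + 1 + sqrt((|a_1| - 1)^2 + 4 A_2))/2, where A_2 = max_{2 ≤ j ≤ n} |a_j| (Joyal–Labelle–Rahman bound). -/
theorem joyal_labelle_rahman_bound (n : ℕ) (hn : 2 ≤ n) (a : ℕ → ℂ) (A₂ : ℝ)
    (hA₂ : IsGreatest {x : ℝ | ∃ j ∈ Finset.Icc 2 n, x = ‖a j‖} A₂) :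
    ∀ z : ℂ, z ^ n + ∑ j ∈ Finset.Icc 1 n, a j * z ^ (n - j) = 0 →
      ‖z‖ ≤
        (‖a 1‖ + 1 +
          Real.sqrt ((‖a 1‖ - 1) ^ 2 + 4 * A₂)) / 2 := by
  obtain ⟨⟨j0, hj0, hAj0⟩, hub⟩ := hA₂
  have hA0 : 0 ≤ A₂ := hAj0 ▸ norm_nonneg _
  intro z hz
  set r := ‖z‖ with hrdef
  set c := ‖a 1‖ with hcdef
  set s := Real.sqrt ((c - 1) ^ 2 + 4 * A₂) with hsdef
  have hs0 : 0 ≤ s := Real.sqrt_nonneg _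
  have hs2 : s ^ 2 = (c - 1) ^ 2 + 4 * A₂ := Real.sq_sqrt (by positivity)
  set B := (c + 1 + s) / 2 with hBdef
  have hc0 : 0 ≤ c := norm_nonneg _
  have hB1 : 1 ≤ B := by nlinarith [sq_nonneg (s - (1 - c)), sq_nonneg (s + (1 - c))]
  have hBc : c ≤ B := by nlinarith [sq_nonneg (s - (c - 1)), sq_nonneg (s + (c - 1))]
  have hprod : (B - 1) * (B - c) = A₂ := by
    have h4 : 4 * ((B - 1) * (B - c)) = s ^ 2 - (c - 1) ^ 2 := by rw [hBdef]; ring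
    linarith [hs2]
  rcases le_or_gt r B with h | h
  · exact h
  exfalso
  have hr1 : 1 < r := lt_of_le_of_lt hB1 h
  have hr0 : 0 ≤ r := norm_nonneg _
  -- from the root equation
  have hz' : z ^ n = -∑ j ∈ Finset.Icc 1 n, a j * z ^ (n - j) :=
    eq_neg_of_add_eq_zero_left hz
  have hIcc : Finset.Icc 1 n = insert 1 (Finset.Icc 2 n) := by
    ext j; simp [Finset.mem_Icc, Finset.mem_insert]; omega
  have hsum : r ^ n ≤ c * r ^ (n - 1) + ∑ j ∈ Finset.Icc 2 n, A₂ * r ^ (n - j) := by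
    have h1 : r ^ n = ‖(∑ j ∈ Finset.Icc 1 n, a j * z ^ (n - j))‖ := by
      rw [show r ^ n = ‖z ^ n‖ from (norm_pow z n).symm, hz',
        norm_neg]
    rw [h1]
    calc ‖(∑ j ∈ Finset.Icc 1 n, a j * z ^ (n - j))‖
        ≤ ∑ j ∈ Finset.Icc 1 n, ‖a j‖ * r ^ (n - j) := by
          refine le_trans (norm_sum_le _ _) (le_of_eq ?_)
          refine Finset.sum_congr rfl fun j _ => ?_
          rw [norm_mul, norm_pow]
      _ ≤ c * r ^ (n - 1) + ∑ j ∈ Finset.Icc 2 n, A₂ * r ^ (n - j) := by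
          rw [hIcc, Finset.sum_insert (by simp)]
          gcongr with j hj
          exact hub ⟨j, hj, rfl⟩
  -- geometric sum bound
  have hreindex : ∑ j ∈ Finset.Icc 2 n, r ^ (n - j) = ∑ i ∈ Finset.range (n - 1), r ^ i := by
    refine Finset.sum_nbij' (fun j => n - j) (fun i => n - i) ?_ ?_ ?_ ?_ ?_
    · intro j hj; simp only [Finset.mem_Icc] at hj; simp only [Finset.mem_range]; omega
    · intro i hi; simp only [Finset.mem_range] at hi; simp only [Finset.mem_Icc]; omega
    · intro j hj; simp only [Finset.mem_Icc] at hj; show n - (n - j) = j; omega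
    · intro i hi; simp only [Finset.mem_range] at hi; show n - (n - i) = i; omega
    · intro j hj; rfl
  have hgeom : (∑ i ∈ Finset.range (n - 1), r ^ i) * (r - 1) = r ^ (n - 1) - 1 :=
    geom_sum_mul r (n - 1)
  set q := r ^ (n - 1) with hqdef
  have hq1 : 1 ≤ q := one_le_pow₀ (le_of_lt hr1)
  have hrn : r ^ n = q * r := by
    rw [hqdef, ← pow_succ]
    congr 1; omega
  have hS : ∑ j ∈ Finset.Icc 2 n, A₂ * r ^ (n - j) = A₂ * ∑ i ∈ Finset.range (n - 1), r ^ i := by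
    rw [← Finset.mul_sum, hreindex]
  rw [hrn, hS] at hsum
  -- multiply by (r - 1) > 0
  have hkey : (q * r) * (r - 1) ≤ (c * q + A₂ * ∑ i ∈ Finset.range (n - 1), r ^ i) * (r - 1) := by
    apply mul_le_mul_of_nonneg_right hsum (by linarith)
  have hkey2 : (q * r) * (r - 1) ≤ c * q * (r - 1) + A₂ * (q - 1) := by
    calc (q * r) * (r - 1) ≤ (c * q + A₂ * ∑ i ∈ Finset.range (n - 1), r ^ i) * (r - 1) := hkey
      _ = c * q * (r - 1) + A₂ * ((∑ i ∈ Finset.range (n - 1), r ^ i) * (r - 1)) := by ring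
      _ = c * q * (r - 1) + A₂ * (q - 1) := by rw [hgeom]
  have hfin : (r - 1) * (r - c) ≤ A₂ := by
    have hq0 : 0 < q := by linarith
    have : q * ((r - 1) * (r - c)) ≤ q * A₂ := by nlinarith
    exact le_of_mul_le_mul_left this hq0
  nlinarith [hprod, hfin, h, hB1, hBc]
end

section
/- Let ρ be the unique positive root of Q(x) = x^n - Σ|a_j| x^{n-j}. Then ρ ≤ (|a_1| + 1 + sqrt((|a_1| - 1)^2 + 4 A_2))/2 where A_2 = max_{2 ≤ j ≤ n} |a_j|. -/
theorem jlr_bound_on_cauchy_bound (n : ℕ) (hn : 2 ≤ n) (a : ℕ → ℂ)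
    (hne : ∃ j ∈ Finset.Icc 1 n, a j ≠ 0) (ρ : ℝ) (hρpos : 0 < ρ)
    (hρ : ρ ^ n - ∑ j ∈ Finset.Icc 1 n, ‖a j‖ * ρ ^ (n - j) = 0)
    (A₂ : ℝ)
    (hA₂ : IsGreatest {x : ℝ | ∃ j ∈ Finset.Icc 2 n, x = ‖a j‖} A₂) :
    ρ ≤ (‖a 1‖ + 1 +
        Real.sqrt ((‖a 1‖ - 1) ^ 2 + 4 * A₂)) / 2 := by
  set L := ‖a 1‖ with hLdef
  have hL0 : 0 ≤ L := norm_nonneg _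
  have hA₂0 : 0 ≤ A₂ := by
    obtain ⟨j, hj, hx⟩ := hA₂.1
    rw [hx]; exact norm_nonneg _
  have hD : (0:ℝ) ≤ (L - 1) ^ 2 + 4 * A₂ := by positivity
  rcases le_or_gt ρ 1 with h1 | h1
  · have hs : |L - 1| ≤ Real.sqrt ((L - 1) ^ 2 + 4 * A₂) := by
      rw [← Real.sqrt_sq_eq_abs]
      exact Real.sqrt_le_sqrt (by nlinarith)
    have h2 : 1 - L ≤ |L - 1| := by
      rw [abs_sub_comm]; exact le_abs_self _
    linarith
  · have hsplit : Finset.Icc 1 n = insert 1 (Finset.Icc 2 n) := by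
      ext j; simp only [Finset.mem_Icc, Finset.mem_insert]; omega
    have h1n : (1 : ℕ) ∉ Finset.Icc 2 n := by simp
    have hsum : ρ ^ n = L * ρ ^ (n - 1) +
        ∑ j ∈ Finset.Icc 2 n, ‖a j‖ * ρ ^ (n - j) := by
      have h := hρ
      rw [hsplit, Finset.sum_insert h1n] at h
      linarith
    have hρpow : 0 < ρ ^ (n - 1) := pow_pos hρpos _
    have hbound : ∑ j ∈ Finset.Icc 2 n, ‖a j‖ * ρ ^ (n - j)
        ≤ A₂ * ∑ j ∈ Finset.Icc 2 n, ρ ^ (n - j) := by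
      rw [Finset.mul_sum]
      apply Finset.sum_le_sum
      intro j hj
      have hja : ‖a j‖ ≤ A₂ := hA₂.2 ⟨j, hj, rfl⟩
      have hp : 0 < ρ ^ (n - j) := pow_pos hρpos _
      nlinarith
    have hre : ∑ j ∈ Finset.Icc 2 n, ρ ^ (n - j)
        = ∑ k ∈ Finset.range (n - 1), ρ ^ k := by
      apply Finset.sum_nbij' (fun j => n - j) (fun k => n - k)
      · intro j hj; simp only [Finset.mem_Icc] at hj; simp only [Finset.mem_range]; omega
      · intro k hk; simp only [Finset.mem_range] at hk; simp only [Finset.mem_Icc]; omega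
      · intro j hj; simp only [Finset.mem_Icc] at hj; omega
      · intro k hk; simp only [Finset.mem_range] at hk; omega
      · intro j hj; rfl
    have hgeom : (∑ k ∈ Finset.range (n - 1), ρ ^ k) * (ρ - 1) = ρ ^ (n - 1) - 1 :=
      geom_sum_mul ρ (n - 1)
    have hn1 : ρ ^ n = ρ * ρ ^ (n - 1) := by
      rw [← pow_succ']; congr 1; omega
    have h2 : ρ * ρ ^ (n - 1) ≤ L * ρ ^ (n - 1) +
        A₂ * ∑ k ∈ Finset.range (n - 1), ρ ^ k := by
      rw [← hn1, hsum, ← hre]; linarith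
    have hmul : (ρ * ρ ^ (n - 1)) * (ρ - 1) ≤ (L * ρ ^ (n - 1) +
        A₂ * ∑ k ∈ Finset.range (n - 1), ρ ^ k) * (ρ - 1) :=
      mul_le_mul_of_nonneg_right h2 (by linarith)
    have h3 : ρ * ρ ^ (n - 1) * (ρ - 1) ≤
        L * ρ ^ (n - 1) * (ρ - 1) + A₂ * (ρ ^ (n - 1) - 1) := by
      nlinarith [hmul, hgeom]
    have key : ρ * (ρ - 1) ≤ L * (ρ - 1) + A₂ := by
      nlinarith [h3, hρpow, hA₂0]
    have hsq : (2 * ρ - (L + 1)) ^ 2 ≤ (L - 1) ^ 2 + 4 * A₂ := by nlinarith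
    have hfin : 2 * ρ - (L + 1) ≤ Real.sqrt ((L - 1) ^ 2 + 4 * A₂) := by
      calc 2 * ρ - (L + 1) ≤ |2 * ρ - (L + 1)| := le_abs_self _
        _ = Real.sqrt ((2 * ρ - (L + 1)) ^ 2) := (Real.sqrt_sq_eq_abs _).symm
        _ ≤ _ := Real.sqrt_le_sqrt hsq
    linarith
end

section
/- Let 1 ≤ ℓ ≤ q where q is the largest index with a_q ≠ 0. Then the polynomial P_ℓ(x) = (x - 1) F_ℓ(x) - A_ℓ, with F_ℓ(x) = x^{ℓ-1} - Σ_{j=1}^{ℓ-1} |a_j| x^{ℓ-1-j} and A_ℓ = max_{j ≥ ℓ} |a_j| > 0, has exactly one real zero in the interval [1, +∞). -/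
theorem Pl_unique_zero_on_Ici (n q : ℕ) (a : ℕ → ℂ) (hq : a q ≠ 0)
    (ha0 : ∀ j > q, a j = 0) (ℓ : ℕ) (hℓ1 : 1 ≤ ℓ) (hℓq : ℓ ≤ q) (Aℓ : ℝ)
    (hA : IsGreatest {x : ℝ | ∃ j ≥ ℓ, x = ‖a j‖} Aℓ) :
    ∃! y : ℝ, 1 ≤ y ∧
      (y - 1) * (y ^ (ℓ - 1) -
          ∑ j ∈ Finset.Icc 1 (ℓ - 1), ‖a j‖ * y ^ (ℓ - 1 - j))
        - Aℓ = 0 := by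
  set c : ℕ → ℝ := fun j => ‖a j‖ with hc
  set S : Finset ℕ := Finset.Icc 1 (ℓ - 1) with hS
  set F : ℝ → ℝ := fun y => y ^ (ℓ - 1) - ∑ j ∈ S, c j * y ^ (ℓ - 1 - j) with hF
  have hApos : 0 < Aℓ := by
    have h1 : ‖a q‖ ≤ Aℓ := hA.2 ⟨q, hℓq, rfl⟩
    have h2 : 0 < ‖a q‖ := by
      simpa using hq
    linarith
  have hcnonneg : ∀ j, 0 ≤ c j := fun j => norm_nonneg _
  -- key monotonicity: if 1 ≤ y ≤ z and F y > 0 then F y ≤ F z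
  have hmono : ∀ y z : ℝ, 1 ≤ y → y ≤ z → 0 < F y → F y ≤ F z := by
    intro y z hy hyz hFy
    have hy0 : (0:ℝ) ≤ y := by linarith
    have hz0 : (0:ℝ) ≤ z := by linarith
    have hyp : 0 < y ^ (ℓ - 1) := pow_pos (by linarith) _
    have hcleared : z ^ (ℓ - 1) * F y ≤ y ^ (ℓ - 1) * F z := by
      simp only [hF, mul_sub, Finset.mul_sum]
      have hsum : ∀ j ∈ S, y ^ (ℓ - 1) * (c j * z ^ (ℓ - 1 - j)) ≤
          z ^ (ℓ - 1) * (c j * y ^ (ℓ - 1 - j)) := by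
        intro j hj
        have hjle : j ≤ ℓ - 1 := (Finset.mem_Icc.mp hj).2
        obtain ⟨e, he⟩ : ∃ e, ℓ - 1 = e + j := ⟨ℓ - 1 - j, (Nat.sub_add_cancel hjle).symm⟩
        have hpow : y ^ j ≤ z ^ j := pow_le_pow_left₀ hy0 hyz j
        rw [he]
        simp only [Nat.add_sub_cancel]
        calc y ^ (e + j) * (c j * z ^ e)
            = (c j * (y ^ e * z ^ e)) * y ^ j := by ring
          _ ≤ (c j * (y ^ e * z ^ e)) * z ^ j := by
              apply mul_le_mul_of_nonneg_left hpow
              positivity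
          _ = z ^ (e + j) * (c j * y ^ e) := by ring
      have := Finset.sum_le_sum hsum
      nlinarith [this]
    have hpowle : y ^ (ℓ - 1) ≤ z ^ (ℓ - 1) := pow_le_pow_left₀ hy0 hyz _
    have : y ^ (ℓ - 1) * F y ≤ y ^ (ℓ - 1) * F z := by
      calc y ^ (ℓ - 1) * F y ≤ z ^ (ℓ - 1) * F y := by
            apply mul_le_mul_of_nonneg_right hpowle (le_of_lt hFy)
        _ ≤ y ^ (ℓ - 1) * F z := hcleared
    exact le_of_mul_le_mul_left this hyp
  -- at any zero y: y > 1 and F y > 0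
  have hzero : ∀ y : ℝ, 1 ≤ y → (y - 1) * F y - Aℓ = 0 → 1 < y ∧ 0 < F y := by
    intro y hy hPy
    have heq : (y - 1) * F y = Aℓ := by linarith
    have hy1 : 1 < y := by
      rcases lt_or_eq_of_le hy with h | h
      · exact h
      · exfalso; rw [← h] at heq; simp at heq; linarith
    refine ⟨hy1, ?_⟩
    by_contra hFy
    push_neg at hFy
    nlinarith
  -- existence
  set C : ℝ := ∑ j ∈ S, c j with hC
  have hCnonneg : 0 ≤ C := Finset.sum_nonneg fun j _ => hcnonneg j
  set M : ℝ := C + 2 + Aℓ with hM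
  have hM1 : 1 ≤ M := by linarith
  have hPM : 0 ≤ (M - 1) * F M - Aℓ := by
    rcases eq_or_lt_of_le hℓ1 with h1 | h2
    · -- ℓ = 1
      have : ℓ - 1 = 0 := by omega
      simp only [hF, hS, this, Finset.Icc_self, pow_zero]
      simp only [Finset.Icc_eq_empty_of_lt (by norm_num : (1:ℕ) > 0), Finset.sum_empty]
      nlinarith
    · -- ℓ ≥ 2
      have hl2 : 2 ≤ ℓ := h2
      have he : ℓ - 1 = (ℓ - 2) + 1 := by omega
      have hsum : ∑ j ∈ S, c j * M ^ (ℓ - 1 - j) ≤ C * M ^ (ℓ - 2) := by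
        rw [hC, Finset.sum_mul]
        apply Finset.sum_le_sum
        intro j hj
        have hj1 : 1 ≤ j := (Finset.mem_Icc.mp hj).1
        have : ℓ - 1 - j ≤ ℓ - 2 := by omega
        exact mul_le_mul_of_nonneg_left (pow_le_pow_right₀ hM1 this) (hcnonneg j)
      have hMpow : 1 ≤ M ^ (ℓ - 2) := one_le_pow₀ hM1
      have hFM : 2 + Aℓ ≤ F M := by
        have hexp : M ^ (ℓ - 1) = M * M ^ (ℓ - 2) := by
          rw [he, pow_succ]; ring
        have : (M - C) * M ^ (ℓ - 2) ≤ F M := by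
          simp only [hF]
          rw [hexp]
          nlinarith [hsum]
        nlinarith
      nlinarith
  have hcont : Continuous (fun y : ℝ => (y - 1) * F y - Aℓ) := by
    simp only [hF]
    fun_prop
  have hivt : ∃ y ∈ Set.Icc (1:ℝ) M, (y - 1) * F y - Aℓ = 0 := by
    have h0mem : (0:ℝ) ∈ Set.Icc ((1 - 1) * F 1 - Aℓ) ((M - 1) * F M - Aℓ) := by
      constructor
      · simp; linarith
      · exact hPM
    have := intermediate_value_Icc hM1 (hcont.continuousOn)
    obtain ⟨y, hy, hy0⟩ := this h0mem
    exact ⟨y, hy, hy0⟩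
  obtain ⟨y₀, hy₀mem, hy₀⟩ := hivt
  refine ⟨y₀, ⟨hy₀mem.1, by simpa [hF, hc, hS] using hy₀⟩, ?_⟩
  -- uniqueness
  rintro z ⟨hz1, hPz⟩
  have hPz' : (z - 1) * F z - Aℓ = 0 := by simpa [hF, hc, hS] using hPz
  have key : ∀ u v : ℝ, 1 ≤ u → 1 ≤ v → (u - 1) * F u - Aℓ = 0 →
      (v - 1) * F v - Aℓ = 0 → u < v → False := by
    intro u v hu hv hPu hPv huv
    obtain ⟨hu1, hFu⟩ := hzero u hu hPu
    obtain ⟨hv1, hFv⟩ := hzero v hv hPv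
    have hFle : F u ≤ F v := hmono u v hu (le_of_lt huv) hFu
    have : (u - 1) * F u < (v - 1) * F v := by nlinarith
    linarith
  rcases lt_trichotomy z y₀ with h | h | h
  · exact absurd (key z y₀ hz1 hy₀mem.1 hPz' hy₀ h) (fun x => x)
  · exact h
  · exact absurd (key y₀ z hy₀mem.1 hz1 hy₀ hPz' h) (fun x => x)
end

section
/- For ℓ > q (q the largest index with a_q ≠ 0), the largest real zero r_ℓ of P_ℓ(x) = (x-1) F_ℓ(x) equals max(1, ρ), where ρ is the unique positive root of Q(x) = x^q - Σ_{j=1}^q |a_j| x^{q-j}. -/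
theorem rl_eq_max_one_rho (n q : ℕ) (a : ℕ → ℂ) (hq : a q ≠ 0)
    (ha0 : ∀ j > q, a j = 0) (ℓ : ℕ) (hℓ : q < ℓ)
    (ρ : ℝ) (hρpos : 0 < ρ)
    (hρ : ρ ^ q - ∑ j ∈ Finset.Icc 1 q, ‖a j‖ * ρ ^ (q - j) = 0)
    (rℓ : ℝ)
    (hrℓ : IsGreatest {x : ℝ |
      (x - 1) * (x ^ (ℓ - 1) -
        ∑ j ∈ Finset.Icc 1 (ℓ - 1), ‖a j‖ * x ^ (ℓ - 1 - j)) = 0} rℓ) :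
    rℓ = max 1 ρ := by
  have hq1 : 1 ≤ q := by
    by_contra h
    push_neg at h
    interval_cases q
    simp at hρ
  have hq' : q ≤ ℓ - 1 := by omega
  -- sum factorization
  have key : ∀ x : ℝ, ∑ j ∈ Finset.Icc 1 (ℓ - 1), ‖a j‖ * x ^ (ℓ - 1 - j)
      = x ^ (ℓ - 1 - q) * ∑ j ∈ Finset.Icc 1 q, ‖a j‖ * x ^ (q - j) := by
    intro x
    rw [Finset.mul_sum,
      ← Finset.sum_subset (Finset.Icc_subset_Icc_right hq')
        (fun j hj hj' => by
          simp only [Finset.mem_Icc] at hj hj'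
          have : a j = 0 := ha0 j (by omega)
          simp [this])]
    apply Finset.sum_congr rfl
    intro j hj
    simp only [Finset.mem_Icc] at hj
    rw [← mul_assoc, mul_comm (x ^ (ℓ - 1 - q)), mul_assoc, ← pow_add]
    congr 2
    omega
  have h1mem : (1 : ℝ) ∈ {x : ℝ |
      (x - 1) * (x ^ (ℓ - 1) -
        ∑ j ∈ Finset.Icc 1 (ℓ - 1), ‖a j‖ * x ^ (ℓ - 1 - j)) = 0} := by
    simp
  have hρmem : ρ ∈ {x : ℝ |
      (x - 1) * (x ^ (ℓ - 1) -
        ∑ j ∈ Finset.Icc 1 (ℓ - 1), ‖a j‖ * x ^ (ℓ - 1 - j)) = 0} := by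
    simp only [Set.mem_setOf_eq]
    rw [key ρ]
    have hpow : ρ ^ (ℓ - 1) = ρ ^ (ℓ - 1 - q) * ρ ^ q := by
      rw [← pow_add]; congr 1; omega
    rw [hpow, ← mul_sub, hρ, mul_zero, mul_zero]
  -- max 1 ρ ≤ rℓ
  have hge : max 1 ρ ≤ rℓ := by
    rcases le_total ρ 1 with h | h
    · rw [max_eq_left h]; exact hrℓ.2 h1mem
    · rw [max_eq_right h]; exact hrℓ.2 hρmem
  -- rℓ ≤ max 1 ρ
  have h1le : (1 : ℝ) ≤ rℓ := hrℓ.2 h1mem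
  have hle : rℓ ≤ max 1 ρ := by
    by_contra h
    push_neg at h
    have hρlt : ρ < rℓ := lt_of_le_of_lt (le_max_right 1 ρ) h
    have h1lt : (1 : ℝ) < rℓ := lt_of_le_of_lt (le_max_left 1 ρ) h
    have hrpos : (0 : ℝ) < rℓ := lt_trans one_pos h1lt
    have hmem := hrℓ.1
    simp only [Set.mem_setOf_eq] at hmem
    rcases mul_eq_zero.mp hmem with h0 | h0
    · have : rℓ = 1 := by linarith
      linarith
    · rw [key rℓ] at h0
      have hpow : rℓ ^ (ℓ - 1) = rℓ ^ (ℓ - 1 - q) * rℓ ^ q := by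
        rw [← pow_add]; congr 1; omega
      rw [hpow, ← mul_sub] at h0
      have hQpos : 0 < rℓ ^ q - ∑ j ∈ Finset.Icc 1 q, ‖a j‖ * rℓ ^ (q - j) := by
        have hsum : (∑ j ∈ Finset.Icc 1 q, ‖a j‖ * rℓ ^ (q - j)) * ρ ^ q
            < rℓ ^ q * ρ ^ q := by
          have hρeq : ρ ^ q = ∑ j ∈ Finset.Icc 1 q, ‖a j‖ * ρ ^ (q - j) := by
            linarith
          calc (∑ j ∈ Finset.Icc 1 q, ‖a j‖ * rℓ ^ (q - j)) * ρ ^ q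
              = ∑ j ∈ Finset.Icc 1 q, ‖a j‖ * rℓ ^ (q - j) * ρ ^ q := by
                rw [Finset.sum_mul]
            _ < ∑ j ∈ Finset.Icc 1 q, ‖a j‖ * ρ ^ (q - j) * rℓ ^ q := by
                apply Finset.sum_lt_sum
                · intro j hj
                  simp only [Finset.mem_Icc] at hj
                  have hρq : ρ ^ q = ρ ^ (q - j) * ρ ^ j := by
                    rw [← pow_add]; congr 1; omega
                  have hrq : rℓ ^ q = rℓ ^ (q - j) * rℓ ^ j := by
                    rw [← pow_add]; congr 1; omega
                  rw [hρq, hrq]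
                  have hρj : ρ ^ j ≤ rℓ ^ j :=
                    pow_le_pow_left₀ hρpos.le hρlt.le j
                  have h1 : (0 : ℝ) ≤ ‖a j‖ := norm_nonneg _
                  have h2 : (0 : ℝ) ≤ rℓ ^ (q - j) := pow_nonneg hrpos.le _
                  have h3 : (0 : ℝ) ≤ ρ ^ (q - j) := pow_nonneg hρpos.le _
                  have hc : 0 ≤ ‖a j‖ * rℓ ^ (q - j) * ρ ^ (q - j) :=
                    mul_nonneg (mul_nonneg h1 h2) h3
                  nlinarith [mul_le_mul_of_nonneg_left hρj hc]
                · refine ⟨q, Finset.mem_Icc.mpr ⟨hq1, le_refl q⟩, ?_⟩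
                  have habs : 0 < ‖a q‖ := by
                    simpa using norm_pos_iff.mpr hq
                  have hρq : ρ ^ q < rℓ ^ q := by
                    apply pow_lt_pow_left₀ hρlt hρpos.le
                    omega
                  simp only [Nat.sub_self, pow_zero, mul_one]
                  exact mul_lt_mul_of_pos_left hρq habs
            _ = rℓ ^ q * ρ ^ q := by rw [← Finset.sum_mul, ← hρeq]; ring
        have := lt_of_mul_lt_mul_right hsum (pow_pos hρpos q).le
        linarith
      have := mul_pos (pow_pos hrpos (ℓ - 1 - q)) hQpos
      linarith
  linarith [le_antisymm hle hge]
end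

section
/- Let r_ℓ be the largest real zero in [1,∞) of P_ℓ(x) = (x-1)F_ℓ(x) - A_ℓ, where F_ℓ(x) = x^{ℓ-1} - Σ_{j=1}^{ℓ-1}|a_j| x^{ℓ-1-j} and A_ℓ = max_{j ≥ ℓ}|a_j|. Then for 1 ≤ ℓ < q (q the largest index with a_q ≠ 0), r_{ℓ+1} ≤ r_ℓ. -/
theorem r_succ_le_r (n q : ℕ) (a : ℕ → ℂ) (hq : a q ≠ 0)
    (ha0 : ∀ j > q, a j = 0) (ℓ : ℕ) (hℓ1 : 1 ≤ ℓ) (hℓq : ℓ < q)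
    (Aℓ Aℓ₁ : ℝ)
    (hA : IsGreatest {x : ℝ | ∃ j ≥ ℓ, x = ‖a j‖} Aℓ)
    (hA₁ : IsGreatest {x : ℝ | ∃ j ≥ ℓ + 1, x = ‖a j‖} Aℓ₁)
    (rℓ rℓ₁ : ℝ)
    (hrℓ : (1 ≤ rℓ ∧
      (rℓ - 1) * (rℓ ^ (ℓ - 1) -
        ∑ j ∈ Finset.Icc 1 (ℓ - 1), ‖a j‖ * rℓ ^ (ℓ - 1 - j))
        - Aℓ = 0) ∧
      ∀ y : ℝ, 1 ≤ y →
        (y - 1) * (y ^ (ℓ - 1) -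
          ∑ j ∈ Finset.Icc 1 (ℓ - 1), ‖a j‖ * y ^ (ℓ - 1 - j))
          - Aℓ = 0 → y = rℓ)
    (hrℓ₁ : (1 ≤ rℓ₁ ∧
      (rℓ₁ - 1) * (rℓ₁ ^ (ℓ + 1 - 1) -
        ∑ j ∈ Finset.Icc 1 (ℓ + 1 - 1), ‖a j‖ * rℓ₁ ^ (ℓ + 1 - 1 - j))
        - Aℓ₁ = 0) ∧
      ∀ y : ℝ, 1 ≤ y →
        (y - 1) * (y ^ (ℓ + 1 - 1) -
          ∑ j ∈ Finset.Icc 1 (ℓ + 1 - 1), ‖a j‖ * y ^ (ℓ + 1 - 1 - j))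
          - Aℓ₁ = 0 → y = rℓ₁) :
    rℓ₁ ≤ rℓ := by
  obtain ⟨⟨hr1, hre⟩, hru⟩ := hrℓ
  obtain ⟨⟨hs1, hse⟩, hsu⟩ := hrℓ₁
  -- basic inequalities about Aℓ, Aℓ₁
  have haq : 0 < ‖a q‖ := norm_pos_iff.mpr hq
  have hA1pos : 0 < Aℓ₁ :=
    lt_of_lt_of_le haq (hA₁.2 ⟨q, by omega, rfl⟩)
  have hAl_ge : ‖a ℓ‖ ≤ Aℓ := hA.2 ⟨ℓ, le_refl _, rfl⟩
  have hAA : Aℓ₁ ≤ Aℓ := by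
    obtain ⟨j, hj, hje⟩ := hA₁.1
    exact hje ▸ hA.2 ⟨j, by omega, rfl⟩
  set g : ℝ → ℝ := fun x =>
    (x - 1) * (x ^ ℓ - ∑ j ∈ Finset.Icc 1 ℓ, ‖a j‖ * x ^ (ℓ - j)) - Aℓ₁
    with hg
  have hcont : Continuous g := by fun_prop
  -- key identity
  have key : ∀ x : ℝ, g x =
      x * ((x - 1) * (x ^ (ℓ - 1) -
        ∑ j ∈ Finset.Icc 1 (ℓ - 1), ‖a j‖ * x ^ (ℓ - 1 - j)))
      - (x - 1) * ‖a ℓ‖ - Aℓ₁ := by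
    intro x
    have h1 : ℓ - 1 + 1 = ℓ := Nat.succ_pred_eq_of_pos hℓ1
    have hsum : ∑ j ∈ Finset.Icc 1 ℓ, ‖a j‖ * x ^ (ℓ - j)
        = (∑ j ∈ Finset.Icc 1 (ℓ - 1), ‖a j‖ * x ^ (ℓ - j))
          + ‖a ℓ‖ := by
      rw [← h1, Finset.sum_Icc_succ_top (by omega)]
      simp [h1]
    have hsum2 : ∑ j ∈ Finset.Icc 1 (ℓ - 1), ‖a j‖ * x ^ (ℓ - j)
        = x * ∑ j ∈ Finset.Icc 1 (ℓ - 1), ‖a j‖ * x ^ (ℓ - 1 - j) := by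
      rw [Finset.mul_sum]
      refine Finset.sum_congr rfl fun j hj => ?_
      have hjle : j ≤ ℓ - 1 := (Finset.mem_Icc.mp hj).2
      have : ℓ - j = (ℓ - 1 - j) + 1 := by omega
      rw [this, pow_succ]; ring
    have hpow : x ^ ℓ = x * x ^ (ℓ - 1) := by
      conv_lhs => rw [← h1]
      rw [pow_succ]; ring
    rw [hg]
    simp only
    rw [hsum, hsum2, hpow]
    ring
  -- g rℓ ≥ 0
  have hgr : 0 ≤ g rℓ := by
    rw [key rℓ]
    have h0 : (rℓ - 1) * (rℓ ^ (ℓ - 1) -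
        ∑ j ∈ Finset.Icc 1 (ℓ - 1), ‖a j‖ * rℓ ^ (ℓ - 1 - j)) = Aℓ := by
      linarith
    rw [h0]
    nlinarith [mul_nonneg (by linarith : (0:ℝ) ≤ rℓ - 1)
      (by linarith : (0:ℝ) ≤ Aℓ - ‖a ℓ‖)]
  have hg1 : g 1 ≤ 0 := by simp [hg]; linarith
  -- IVT
  have hmem : (0:ℝ) ∈ Set.Icc (g 1) (g rℓ) := ⟨hg1, hgr⟩
  obtain ⟨y, hy, hgy⟩ := intermediate_value_Icc hr1 hcont.continuousOn hmem
  have hy1 : y = rℓ₁ := by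
    apply hsu y hy.1
    simp only [Nat.add_sub_cancel]
    exact hgy
  linarith [hy.2, hy1 ▸ hy.2]
end

section
/- Let r_q be the unique zero in [1,∞) of P_q(x) = (x-1)F_q(x) - |a_q|, where q is the largest index with a_q ≠ 0. Then r_q > max(1, ρ), where ρ is the unique positive root of Q(x) = x^q - Σ_{j=1}^q |a_j| x^{q-j}. -/
theorem rq_gt_max_one_rho (n q : ℕ) (a : ℕ → ℂ) (hq : a q ≠ 0) (hq1 : 1 ≤ q)
    (ha0 : ∀ j > q, a j = 0)
    (ρ : ℝ) (hρpos : 0 < ρ)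
    (hρ : ρ ^ q - ∑ j ∈ Finset.Icc 1 q, ‖a j‖ * ρ ^ (q - j) = 0)
    (rq : ℝ) (hrq1 : 1 ≤ rq)
    (hrq : (rq - 1) * (rq ^ (q - 1) -
        ∑ j ∈ Finset.Icc 1 (q - 1), ‖a j‖ * rq ^ (q - 1 - j))
        - ‖a q‖ = 0)
    (hrquniq : ∀ y : ℝ, 1 ≤ y →
      (y - 1) * (y ^ (q - 1) -
        ∑ j ∈ Finset.Icc 1 (q - 1), ‖a j‖ * y ^ (q - 1 - j))
        - ‖a q‖ = 0 → y = rq) :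
    rq > max 1 ρ := by
  obtain ⟨k, rfl⟩ : ∃ k, q = k + 1 := ⟨q - 1, (Nat.succ_pred_eq_of_pos hq1).symm⟩
  set c : ℕ → ℝ := fun j => ‖a j‖ with hc
  have hcnn : ∀ j, 0 ≤ c j := fun j => norm_nonneg _
  set A : ℝ := c (k + 1) with hA
  have hApos : 0 < A := norm_pos_iff.mpr hq
  simp only [Nat.add_sub_cancel] at hrq hrquniq ⊢
  -- rq > 1
  have hrq1' : 1 < rq := by
    rcases lt_or_eq_of_le hrq1 with h | h
    · exact h
    · exfalso
      rw [← h] at hrq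
      simp at hrq
      exact hq hrq
  rw [gt_iff_lt, max_lt_iff]
  refine ⟨hrq1', ?_⟩
  rcases le_or_gt ρ 1 with hρ1 | hρ1
  · linarith
  -- now ρ > 1
  set g : ℝ → ℝ := fun y =>
    (y - 1) * (y ^ k - ∑ j ∈ Finset.Icc 1 k, c j * y ^ (k - j)) - A with hg
  have hgcont : Continuous g := by
    apply Continuous.sub _ continuous_const
    apply Continuous.mul (by fun_prop)
    exact (continuous_pow k).sub
      (continuous_finset_sum _ fun j _ => continuous_const.mul (continuous_pow _))
  -- g ρ < 0
  have hρF : ρ * (ρ ^ k - ∑ j ∈ Finset.Icc 1 k, c j * ρ ^ (k - j)) = A := by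
    rw [Finset.sum_Icc_succ_top (by omega : 1 ≤ k + 1)] at hρ
    simp only [Nat.sub_self, pow_zero, mul_one] at hρ
    have hsum : ∑ j ∈ Finset.Icc 1 k, c j * ρ ^ (k + 1 - j)
        = ∑ j ∈ Finset.Icc 1 k, c j * (ρ * ρ ^ (k - j)) := by
      apply Finset.sum_congr rfl
      intro j hj
      simp only [Finset.mem_Icc] at hj
      have he : k + 1 - j = (k - j) + 1 := by omega
      rw [he, pow_succ']
    rw [hsum] at hρ
    rw [mul_sub, ← pow_succ', Finset.mul_sum]
    have : ∑ j ∈ Finset.Icc 1 k, ρ * (c j * ρ ^ (k - j))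
        = ∑ j ∈ Finset.Icc 1 k, c j * (ρ * ρ ^ (k - j)) := by
      apply Finset.sum_congr rfl; intro j _; ring
    rw [this]
    linarith
  have hgρ : g ρ < 0 := by
    set F := ρ ^ k - ∑ j ∈ Finset.Icc 1 k, c j * ρ ^ (k - j) with hF
    have hFpos : 0 < F := by nlinarith
    have : g ρ = (ρ - 1) * F - A := rfl
    rw [this]
    nlinarith
  -- choose M large
  set S : ℝ := ∑ j ∈ Finset.Icc 1 k, c j with hS
  have hSnn : 0 ≤ S := Finset.sum_nonneg fun j _ => hcnn j
  set M : ℝ := max ρ (2 + S + A) with hM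
  have hM1 : 1 ≤ M := le_trans (by linarith) (le_max_right _ _)
  have hMS : 2 + S + A ≤ M := le_max_right _ _
  have hρM : ρ ≤ M := le_max_left _ _
  have hgM : 0 < g M := by
    have hbound : ∀ j ∈ Finset.Icc 1 k, (M - 1) * (c j * M ^ (k - j)) ≤ c j * M ^ k := by
      intro j hj
      simp only [Finset.mem_Icc] at hj
      have h1 : (M - 1) * M ^ (k - j) ≤ M * M ^ (k - j) := by
        apply mul_le_mul_of_nonneg_right (by linarith) (by positivity)
      have h2 : M * M ^ (k - j) = M ^ (k - j + 1) := (pow_succ' M _).symm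
      have h3 : M ^ (k - j + 1) ≤ M ^ k := pow_le_pow_right₀ hM1 (by omega)
      calc (M - 1) * (c j * M ^ (k - j)) = c j * ((M - 1) * M ^ (k - j)) := by ring
        _ ≤ c j * M ^ k := by
            apply mul_le_mul_of_nonneg_left _ (hcnn j)
            calc (M - 1) * M ^ (k - j) ≤ M * M ^ (k - j) := h1
              _ = M ^ (k - j + 1) := h2
              _ ≤ M ^ k := h3
    have hsumle : ∑ j ∈ Finset.Icc 1 k, (M - 1) * (c j * M ^ (k - j)) ≤ S * M ^ k := by
      rw [hS, Finset.sum_mul]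
      exact Finset.sum_le_sum hbound
    have hMk1 : (1 : ℝ) ≤ M ^ k := one_le_pow₀ hM1
    have hexp : g M = (M - 1) * M ^ k
        - ∑ j ∈ Finset.Icc 1 k, (M - 1) * (c j * M ^ (k - j)) - A := by
      simp only [hg, mul_sub, Finset.mul_sum]
    rw [hexp]
    have : (M - 1 - S) * M ^ k ≥ (1 + A) * 1 := by
      apply mul_le_mul (by linarith) hMk1 (by norm_num) (by linarith)
    nlinarith
  -- IVT
  have hmem : (0 : ℝ) ∈ Set.Icc (g ρ) (g M) := ⟨le_of_lt hgρ, le_of_lt hgM⟩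
  obtain ⟨y, hy, hgy⟩ := intermediate_value_Icc hρM hgcont.continuousOn hmem
  have hy1 : 1 ≤ y := le_trans (le_of_lt hρ1) hy.1
  have hyrq : y = rq := hrquniq y hy1 hgy
  have hyne : y ≠ ρ := by
    intro h
    rw [h] at hgy
    exact ne_of_lt hgρ hgy
  have : ρ < y := lt_of_le_of_ne hy.1 (Ne.symm hyne)
  linarith [hyrq ▸ this]
end

section
/- All zeros z of P(z) = z^n + a_1 z^{n-1} + ... + a_n satisfy |z| < r_ℓ for 1 ≤ ℓ ≤ q, where r_ℓ is the unique zero in [1,∞) of P_ℓ(x) = (x-1)F_ℓ(x) - A_ℓ with F_ℓ(x) = x^{ℓ-1} - Σ_{j=1}^{ℓ-1}|a_j| x^{ℓ-1-j} and A_ℓ = max_{j ≥ ℓ}|a_j|. -/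
theorem zeros_lt_rl (n q : ℕ) (hn : 1 ≤ n) (a : ℕ → ℂ) (hq : a q ≠ 0)
    (hqn : q ≤ n) (ha0 : ∀ j > q, a j = 0)
    (ℓ : ℕ) (hℓ1 : 1 ≤ ℓ) (hℓq : ℓ ≤ q) (Aℓ : ℝ)
    (hA : IsGreatest {x : ℝ | ∃ j ≥ ℓ, x = ‖a j‖} Aℓ)
    (rℓ : ℝ) (hrℓ1 : 1 ≤ rℓ)
    (hrℓ : (rℓ - 1) * (rℓ ^ (ℓ - 1) -
        ∑ j ∈ Finset.Icc 1 (ℓ - 1), ‖a j‖ * rℓ ^ (ℓ - 1 - j))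
        - Aℓ = 0)
    (hrℓuniq : ∀ y : ℝ, 1 ≤ y →
      (y - 1) * (y ^ (ℓ - 1) -
        ∑ j ∈ Finset.Icc 1 (ℓ - 1), ‖a j‖ * y ^ (ℓ - 1 - j))
        - Aℓ = 0 → y = rℓ) :
    ∀ z : ℂ, z ^ n + ∑ j ∈ Finset.Icc 1 n, a j * z ^ (n - j) = 0 →
      ‖z‖ < rℓ := by
  intro z hz
  by_contra hcon
  push_neg at hcon
  set x := ‖z‖ with hxdef
  have hℓn : ℓ ≤ n := le_trans hℓq hqn
  have hApos : 0 < Aℓ :=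
    lt_of_lt_of_le (norm_pos_iff.mpr hq) (hA.2 ⟨q, hℓq, rfl⟩)
  have hr1 : 1 < rℓ := by
    rcases lt_or_eq_of_le hrℓ1 with h | h
    · exact h
    · exfalso; rw [← h] at hrℓ; simp at hrℓ; linarith
  have hx1 : 1 < x := lt_of_lt_of_le hr1 hcon
  have hxpow : ∀ k : ℕ, (0:ℝ) < x ^ k := fun k => pow_pos (by linarith) k
  -- Step A: triangle inequality
  have hsumA : x ^ n ≤ ∑ j ∈ Finset.Icc 1 n, ‖a j‖ * x ^ (n - j) := by
    have h1 : z ^ n = -∑ j ∈ Finset.Icc 1 n, a j * z ^ (n - j) :=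
      eq_neg_of_add_eq_zero_left hz
    calc x ^ n = ‖z ^ n‖ := (norm_pow z n).symm
      _ = ‖∑ j ∈ Finset.Icc 1 n, a j * z ^ (n - j)‖ := by
          rw [h1, norm_neg]
      _ ≤ ∑ j ∈ Finset.Icc 1 n, ‖a j * z ^ (n - j)‖ :=
          norm_sum_le _ _
      _ = ∑ j ∈ Finset.Icc 1 n, ‖a j‖ * x ^ (n - j) := by
          refine Finset.sum_congr rfl fun j _ => ?_
          rw [norm_mul, norm_pow]
  -- split the sum
  have hsplit : ∑ j ∈ Finset.Icc 1 n, ‖a j‖ * x ^ (n - j)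
      = (∑ j ∈ Finset.Icc 1 (ℓ - 1), ‖a j‖ * x ^ (n - j))
      + ∑ j ∈ Finset.Icc ℓ n, ‖a j‖ * x ^ (n - j) := by
    rw [← Finset.sum_union]
    · apply Finset.sum_congr _ fun _ _ => rfl
      ext j
      simp only [Finset.mem_Icc, Finset.mem_union]
      omega
    · rw [Finset.disjoint_left]
      intro j hj1 hj2
      simp only [Finset.mem_Icc] at hj1 hj2
      omega
  -- tail bound
  have htail : ∑ j ∈ Finset.Icc ℓ n, ‖a j‖ * x ^ (n - j)
      ≤ Aℓ * ∑ j ∈ Finset.Icc ℓ n, x ^ (n - j) := by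
    rw [Finset.mul_sum]
    refine Finset.sum_le_sum fun j hj => ?_
    have hjℓ : ℓ ≤ j := (Finset.mem_Icc.mp hj).1
    exact mul_le_mul_of_nonneg_right (hA.2 ⟨j, hjℓ, rfl⟩) (le_of_lt (hxpow _))
  -- geometric sum
  have hgeom : (∑ j ∈ Finset.Icc ℓ n, x ^ (n - j)) * (x - 1)
      = x ^ (n - ℓ + 1) - 1 := by
    have hre : ∑ j ∈ Finset.Icc ℓ n, x ^ (n - j)
        = ∑ k ∈ Finset.range (n - ℓ + 1), x ^ k := by
      refine Finset.sum_nbij' (fun j => n - j) (fun k => n - k) ?_ ?_ ?_ ?_ ?_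
      · intro j hj; simp only [Finset.mem_Icc] at hj; simp only [Finset.mem_range]; omega
      · intro k hk; simp only [Finset.mem_range] at hk; simp only [Finset.mem_Icc]; omega
      · intro j hj; simp only [Finset.mem_Icc] at hj
        show n - (n - j) = j; omega
      · intro k hk; simp only [Finset.mem_range] at hk
        show n - (n - k) = k; omega
      · intro j hj; rfl
    rw [hre, geom_sum_mul]
  -- head factorization
  have hhead : ∑ j ∈ Finset.Icc 1 (ℓ - 1), ‖a j‖ * x ^ (n - j)
      = x ^ (n - ℓ + 1) *
        ∑ j ∈ Finset.Icc 1 (ℓ - 1), ‖a j‖ * x ^ (ℓ - 1 - j) := by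
    rw [Finset.mul_sum]
    refine Finset.sum_congr rfl fun j hj => ?_
    have hj' := Finset.mem_Icc.mp hj
    have he : n - j = (n - ℓ + 1) + (ℓ - 1 - j) := by omega
    rw [he, pow_add]; ring
  have hxn : x ^ n = x ^ (n - ℓ + 1) * x ^ (ℓ - 1) := by
    rw [← pow_add]; congr 1; omega
  -- conclude f x < 0
  have hfx : (x - 1) * (x ^ (ℓ - 1) -
      ∑ j ∈ Finset.Icc 1 (ℓ - 1), ‖a j‖ * x ^ (ℓ - 1 - j))
      - Aℓ < 0 := by
    have hTpos : (0:ℝ) < x ^ (n - ℓ + 1) := hxpow _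
    have h1 : x ^ (n - ℓ + 1) * x ^ (ℓ - 1)
        ≤ x ^ (n - ℓ + 1) *
            (∑ j ∈ Finset.Icc 1 (ℓ - 1), ‖a j‖ * x ^ (ℓ - 1 - j))
          + Aℓ * ∑ j ∈ Finset.Icc ℓ n, x ^ (n - j) := by
      rw [← hxn, ← hhead]
      rw [hsplit] at hsumA
      linarith [htail]
    have h2 := mul_le_mul_of_nonneg_left h1 (show (0:ℝ) ≤ x - 1 by linarith)
    have h3 : (x - 1) * (Aℓ * ∑ j ∈ Finset.Icc ℓ n, x ^ (n - j))
        = Aℓ * (x ^ (n - ℓ + 1) - 1) := by rw [← hgeom]; ring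
    have h4 : x ^ (n - ℓ + 1) * ((x - 1) * (x ^ (ℓ - 1) -
        ∑ j ∈ Finset.Icc 1 (ℓ - 1), ‖a j‖ * x ^ (ℓ - 1 - j)) - Aℓ)
        < 0 := by nlinarith [h2, h3, hApos]
    nlinarith [h4, hTpos]
  -- a large point where f is positive
  set C := ∑ j ∈ Finset.Icc 1 (ℓ - 1), ‖a j‖ with hCdef
  have hCnn : 0 ≤ C := Finset.sum_nonneg fun j _ => norm_nonneg _
  set M := max x (C + Aℓ + 2) with hMdef
  have hxM : x ≤ M := le_max_left _ _
  have hM2 : C + Aℓ + 2 ≤ M := le_max_right _ _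
  have hM1 : (1:ℝ) ≤ M := by linarith
  have hfM : 0 < (M - 1) * (M ^ (ℓ - 1) -
      ∑ j ∈ Finset.Icc 1 (ℓ - 1), ‖a j‖ * M ^ (ℓ - 1 - j)) - Aℓ := by
    rcases eq_or_lt_of_le hℓ1 with h | h
    · rw [← h]
      norm_num
      linarith
    · -- ℓ ≥ 2
      have hA' : ∑ j ∈ Finset.Icc 1 (ℓ - 1), ‖a j‖ * M ^ (ℓ - 1 - j)
          ≤ C * M ^ (ℓ - 2) := by
        rw [hCdef, Finset.sum_mul]
        refine Finset.sum_le_sum fun j hj => ?_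
        have hj' := Finset.mem_Icc.mp hj
        exact mul_le_mul_of_nonneg_left
          (pow_le_pow_right₀ hM1 (by omega)) (norm_nonneg _)
      have hB : M ^ (ℓ - 1) = M * M ^ (ℓ - 2) := by
        rw [← pow_succ']; congr 1; omega
      have hD : (1:ℝ) ≤ M ^ (ℓ - 2) := one_le_pow₀ hM1
      have hprod : 0 ≤ (M - C) * (M ^ (ℓ - 2) - 1) :=
        mul_nonneg (by linarith) (by linarith)
      have e2 : 1 ≤ M ^ (ℓ - 1) -
          ∑ j ∈ Finset.Icc 1 (ℓ - 1), ‖a j‖ * M ^ (ℓ - 1 - j) := by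
        nlinarith [hA', hB, hprod, hM2, hApos, hCnn]
      have e3 := mul_le_mul_of_nonneg_left e2 (show (0:ℝ) ≤ M - 1 by linarith)
      nlinarith [e3, hM2, hApos, hCnn]
  -- IVT
  have hfc : Continuous (fun y : ℝ => (y - 1) * (y ^ (ℓ - 1) -
      ∑ j ∈ Finset.Icc 1 (ℓ - 1), ‖a j‖ * y ^ (ℓ - 1 - j)) - Aℓ) := by
    apply Continuous.sub _ continuous_const
    apply Continuous.mul (by fun_prop)
    apply Continuous.sub (by fun_prop)
    exact continuous_finset_sum _ fun j _ => by fun_prop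
  obtain ⟨y, hy, hfy⟩ := intermediate_value_Icc hxM hfc.continuousOn
    (show (0:ℝ) ∈ Set.Icc _ _ from ⟨le_of_lt hfx, le_of_lt hfM⟩)
  simp only at hfy
  have hy1 : (1:ℝ) ≤ y := by
    have := hy.1
    linarith
  have hyr : y = rℓ := hrℓuniq y hy1 hfy
  have hxr : x = rℓ := le_antisymm (hyr ▸ hy.1) hcon
  rw [hxr] at hfx
  linarith
end
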